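/- Let 𝒯 be a hierarchy on a finite set V, let S₀ ⊆ V, and let p_adj^{C,(b)} : Ω → [0,1] (C ∈ 𝒯, b = 1,…,B) be random variables on a probability space (Ω, ℱ, ℙ). Assume there is a measurable event A with ℙ(A) ≥ (1−δ)^B (where δ ∈ (0,1)) such that for every b ∈ {1,…,B} and every t ∈ (0,1), ∑_{C ∈ 𝒯̃₀} ℙ({p_adj^{C,(b)} ≤ t} ∩ A) ≤ t. Then for every significance level α ∈ (0,1), the γ-free hierarchically adjusted p-values P_h^C control the familywise error rate: ℙ(∃ C ∈ 𝒯₀ with P_h^C ≤ α) ≤ α + 1 − (1−δ)^B ≤ α + Bδ. -/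

import Mathlib

open MeasureTheory Finset

/-- A hierarchy on a finite set `V`: a finite collection of nonempty subsets of `V`
containing `V` itself, such that any two members are nested or disjoint. -/
def IsHierarchy {ι : Type*} [DecidableEq ι] (V : Finset ι) (𝒯 : Finset (Finset ι)) : Prop :=
  V ∈ 𝒯 ∧ (∀ C ∈ 𝒯, C.Nonempty ∧ C ⊆ V) ∧
    ∀ C ∈ 𝒯, ∀ D ∈ 𝒯, C ⊆ D ∨ D ⊆ C ∨ C ∩ D = ∅

/-- The null clusters: members of the hierarchy not meeting the active set `S₀`. -/
def nullClusters {ι : Type*} [DecidableEq ι] (𝒯 : Finset (Finset ι)) (S₀ : Finset ι) :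
    Finset (Finset ι) :=
  𝒯.filter (fun C => C ∩ S₀ = ∅)

/-- The maximal null clusters: null clusters which are not strictly contained
in another null cluster. -/
def maxNullClusters {ι : Type*} [DecidableEq ι] (𝒯 : Finset (Finset ι)) (S₀ : Finset ι) :
    Finset (Finset ι) :=
  (nullClusters 𝒯 S₀).filter (fun C => ∀ D ∈ nullClusters 𝒯 S₀, ¬ C ⊂ D)

/-- The empirical `γ`-quantile of `a 1, …, a B`: the `⌈γ B⌉`-th smallest of the values. -/
noncomputable def empQuantile (γ : ℝ) {B : ℕ} (a : Fin B → ℝ) : ℝ :=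
  sInf {x : ℝ | ⌈γ * B⌉₊ ≤ (Finset.univ.filter (fun b => a b ≤ x)).card}

/-- The aggregated p-value `Q^C(γ) = min (1, q_γ({p_adj^{C,(b)}/γ}))`. -/
noncomputable def Qagg {ι : Type*} {Ω : Type*} {B : ℕ}
    (p : Finset ι → Fin B → Ω → ℝ) (γ : ℝ) (C : Finset ι) (ω : Ω) : ℝ :=
  min 1 (empQuantile γ (fun b => p C b ω / γ))

/-- The hierarchically adjusted aggregated p-value
`Q_h^C(γ) = max {Q^D(γ) : D ∈ 𝒯, C ⊆ D}` (for `C ∈ 𝒯`). -/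
noncomputable def Qhier {ι : Type*} [DecidableEq ι] {Ω : Type*} {B : ℕ}
    (𝒯 : Finset (Finset ι)) (p : Finset ι → Fin B → Ω → ℝ) (γ : ℝ)
    (C : Finset ι) (ω : Ω) : ℝ :=
  (insert C (𝒯.filter (fun D => C ⊆ D))).sup' (Finset.insert_nonempty _ _)
    (fun D => Qagg p γ D ω)


/-- The γ-free p-value `P^C = min (1, (1 - log γ_min) · inf_{γ ∈ (γ_min,1)} Q^C(γ))`. -/
noncomputable def Pval {ι : Type*} {Ω : Type*} {B : ℕ}
    (p : Finset ι → Fin B → Ω → ℝ) (γmin : ℝ) (C : Finset ι) (ω : Ω) : ℝ :=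
  min 1 ((1 - Real.log γmin) * sInf ((fun γ => Qagg p γ C ω) '' Set.Ioo γmin 1))

/-- The hierarchically adjusted γ-free p-value `P_h^C = max {P^D : D ∈ 𝒯, C ⊆ D}`
(for `C ∈ 𝒯`). -/
noncomputable def Phier {ι : Type*} [DecidableEq ι] {Ω : Type*} {B : ℕ}
    (𝒯 : Finset (Finset ι)) (p : Finset ι → Fin B → Ω → ℝ) (γmin : ℝ)
    (C : Finset ι) (ω : Ω) : ℝ :=
  (insert C (𝒯.filter (fun D => C ⊆ D))).sup' (Finset.insert_nonempty _ _)
    (fun D => Pval p γmin D ω)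


/- ### Auxiliary lemmas -/


lemma tele_inv {k B : ℕ} (hk : 1 ≤ k) (hkB : k ≤ B) :
    ∑ j ∈ Finset.Ico k B, (1:ℝ)/(j*(j+1)) = 1/k - 1/B := by
  have h1 : ∀ j ∈ Finset.Ico k B, (1:ℝ)/(j*(j+1)) = 1/(j:ℝ) - 1/((j+1 : ℕ):ℝ) := by
    intro j hj
    have hj1 : 1 ≤ j := le_trans hk (Finset.mem_Ico.mp hj).1
    have hj0 : (j:ℝ) ≠ 0 := by positivity
    push_cast
    have hj0' : (j:ℝ)+1 ≠ 0 := by positivity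
    field_simp
    ring
  rw [Finset.sum_congr rfl h1, Finset.sum_Ico_eq_sub _ hkB,
    Finset.sum_range_sub' (fun j : ℕ => (1:ℝ)/j), Finset.sum_range_sub' (fun j : ℕ => (1:ℝ)/j)]
  simp
  ring

lemma harm_le_log {k B : ℕ} (hk : 1 ≤ k) (hkB : k ≤ B) :
    ∑ j ∈ Finset.Ico k B, (1:ℝ)/(j+1) ≤ Real.log B - Real.log k := by
  have h1 : ∀ j ∈ Finset.Ico k B, (1:ℝ)/(j+1) ≤ Real.log ((j+1:ℕ):ℝ) - Real.log (j:ℝ) := by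
    intro j hj
    have hj1 : 1 ≤ j := le_trans hk (Finset.mem_Ico.mp hj).1
    have hj0 : (0:ℝ) < j := by positivity
    have hj0' : (0:ℝ) < (j:ℝ)+1 := by positivity
    have h := Real.log_le_sub_one_of_pos (x := (j:ℝ)/((j:ℝ)+1)) (by positivity)
    rw [Real.log_div (ne_of_gt hj0) (ne_of_gt hj0')] at h
    have he : (j:ℝ)/((j:ℝ)+1) - 1 = -(1/((j:ℝ)+1)) := by field_simp; ring
    rw [he] at h
    push_cast
    linarith
  calc ∑ j ∈ Finset.Ico k B, (1:ℝ)/(j+1)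
      ≤ ∑ j ∈ Finset.Ico k B, (Real.log ((j+1:ℕ):ℝ) - Real.log (j:ℝ)) := Finset.sum_le_sum h1
    _ = Real.log B - Real.log k := by
        rw [Finset.sum_Ico_eq_sub _ hkB,
          Finset.sum_range_sub (fun j : ℕ => Real.log (j:ℝ)),
          Finset.sum_range_sub (fun j : ℕ => Real.log (j:ℝ))]
        simp

lemma one_le_f {B : ℕ} (hB : 1 ≤ B) (c : ℝ → ℕ) (hc : ∀ ⦃s t : ℝ⦄, s ≤ t → c s ≤ c t)
    {v : ℝ} (hv : 0 ≤ v) {k k₀ : ℕ} (hk1 : 1 ≤ k₀) (hk0 : k₀ ≤ k) (hkB : k ≤ B)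
    (hcount : (k:ℝ) ≤ c (v*k/B)) :
    1 ≤ (1/B) * (c v : ℝ) + ∑ j ∈ Finset.Ico k₀ B, (1/(j*(j+1))) * (c (v*j/B) : ℝ) := by
  have hk1' : 1 ≤ k := le_trans hk1 hk0
  have hkR : (0:ℝ) < k := by exact_mod_cast hk1'
  have hBR : (0:ℝ) < B := by exact_mod_cast hB
  have hkBR : (k:ℝ) ≤ B := by exact_mod_cast hkB
  -- first term
  have h1 : v * k / B ≤ v := by
    rw [div_le_iff₀ hBR]
    nlinarith
  have hterm1 : (k:ℝ) ≤ (c v : ℝ) := le_trans hcount (by exact_mod_cast hc h1)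
  -- second term
  have h2 : ∀ j ∈ Finset.Ico k B, (1/((j:ℝ)*(j+1))) * (k:ℝ) ≤ (1/((j:ℝ)*(j+1))) * (c (v*j/B) : ℝ) := by
    intro j hj
    obtain ⟨hjk, hjB⟩ := Finset.mem_Ico.mp hj
    have hjk' : (k:ℝ) ≤ j := by exact_mod_cast hjk
    have hthr : v * k / B ≤ v * j / B := by
      have : v * k ≤ v * j := by nlinarith
      exact (div_le_div_iff_of_pos_right hBR).mpr this
    have : (k:ℝ) ≤ (c (v*j/B) : ℝ) := le_trans hcount (by exact_mod_cast hc hthr)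
    have hjpos : (0:ℝ) < j := lt_of_lt_of_le hkR hjk'
    have hcoef : (0:ℝ) ≤ 1/((j:ℝ)*(j+1)) := by positivity
    exact mul_le_mul_of_nonneg_left this hcoef
  have hsum2 : 1 - (k:ℝ)/B ≤ ∑ j ∈ Finset.Ico k₀ B, (1/((j:ℝ)*(j+1))) * (c (v*j/B) : ℝ) := by
    calc 1 - (k:ℝ)/B = (k:ℝ) * (1/k - 1/B) := by
          field_simp
    _ = ∑ j ∈ Finset.Ico k B, (1/((j:ℝ)*(j+1))) * (k:ℝ) := by
        rw [← tele_inv hk1' hkB, Finset.mul_sum]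
        exact Finset.sum_congr rfl (fun j _ => by ring)
    _ ≤ ∑ j ∈ Finset.Ico k B, (1/((j:ℝ)*(j+1))) * (c (v*j/B) : ℝ) := Finset.sum_le_sum h2
    _ ≤ ∑ j ∈ Finset.Ico k₀ B, (1/((j:ℝ)*(j+1))) * (c (v*j/B) : ℝ) := by
        apply Finset.sum_le_sum_of_subset_of_nonneg
        · intro j hj
          obtain ⟨hjk, hjB⟩ := Finset.mem_Ico.mp hj
          exact Finset.mem_Ico.mpr ⟨le_trans hk0 hjk, hjB⟩
        · intro j hj _
          have hj1 : 1 ≤ j := le_trans hk1 (Finset.mem_Ico.mp hj).1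
          have : (0:ℝ) < j := by exact_mod_cast hj1
          positivity
  have hterm1' : (k:ℝ)/B ≤ (1/B) * (c v : ℝ) := by
    rw [div_le_iff₀ hBR] at *
    calc (k:ℝ) ≤ (c v : ℝ) := hterm1
    _ = 1/B * (c v:ℝ) * B := by field_simp
  linarith

-- count
noncomputable def cnt {ι Ω : Type*} {B : ℕ} (p : Finset ι → Fin B → Ω → ℝ) (D : Finset ι) (t : ℝ) (ω : Ω) : ℕ :=
  (Finset.univ.filter (fun b => p D b ω ≤ t)).card

lemma exists_k {ι Ω : Type*} {B : ℕ} (hB : 1 ≤ B) (p : Finset ι → Fin B → Ω → ℝ)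
    {γmin v : ℝ} (hγ0 : 0 < γmin) (hγ1 : γmin < 1) {D : Finset ι} {ω : Ω}
    (hp0 : ∀ b, 0 ≤ p D b ω) (hv0 : 0 < v) (hv1 : v ≤ 1)
    (hlt : sInf ((fun γ => Qagg p γ D ω) '' Set.Ioo γmin 1) < v) :
    ∃ k : ℕ, γmin * B < k ∧ 1 ≤ k ∧ k ≤ B ∧ (k:ℝ) ≤ cnt p D (v * k / B) ω := by
  have hBR : (0:ℝ) < B := by exact_mod_cast hB
  -- nonnegativity of Qagg for γ ∈ (0,1)
  have hQ0 : ∀ γ ∈ Set.Ioo γmin 1, 0 ≤ Qagg p γ D ω := by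
    intro γ hγ
    have hγpos : 0 < γ := lt_trans hγ0 hγ.1
    refine le_min zero_le_one (Real.sInf_nonneg ?_)
    intro x hx
    by_contra hneg
    push_neg at hneg
    have hcard : (Finset.univ.filter (fun b => p D b ω / γ ≤ x)).card = 0 := by
      rw [Finset.card_eq_zero]
      refine Finset.filter_eq_empty_iff.mpr (fun b _ => ?_)
      push_neg
      calc x < 0 := hneg
        _ ≤ p D b ω / γ := div_nonneg (hp0 b) (le_of_lt hγpos)
    have hceil : 1 ≤ ⌈γ * B⌉₊ := Nat.one_le_ceil_iff.mpr (by positivity)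
    rw [Set.mem_setOf_eq, hcard] at hx
    omega
  -- get γ with Qagg < v
  have hne : ((fun γ => Qagg p γ D ω) '' Set.Ioo γmin 1).Nonempty :=
    Set.Nonempty.image _ (Set.nonempty_Ioo.mpr hγ1)
  have hbdd : BddBelow ((fun γ => Qagg p γ D ω) '' Set.Ioo γmin 1) := by
    refine ⟨0, fun y hy => ?_⟩
    obtain ⟨γ, hγ, rfl⟩ := hy
    exact hQ0 γ hγ
  obtain ⟨y, hy, hyv⟩ := (csInf_lt_iff hbdd hne).mp hlt
  obtain ⟨γ, hγ, rfl⟩ := hy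
  have hγpos : 0 < γ := lt_trans hγ0 hγ.1
  have hQlt : empQuantile γ (fun b => p D b ω / γ) < v := by
    rcases min_lt_iff.mp hyv with h | h
    · linarith
    · exact h
  -- the quantile set
  set T := {x : ℝ | ⌈γ * (B:ℝ)⌉₊ ≤ (Finset.univ.filter (fun b => p D b ω / γ ≤ x)).card} with hT
  have hceilB : ⌈γ * (B:ℝ)⌉₊ ≤ B := Nat.ceil_le.mpr (by nlinarith [hγ.2])
  have hTne : T.Nonempty := by
    have hFinne : (Finset.univ : Finset (Fin B)).Nonempty := ⟨⟨0, hB⟩, Finset.mem_univ _⟩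
    refine ⟨(Finset.univ : Finset (Fin B)).sup' hFinne (fun b => p D b ω / γ), ?_⟩
    rw [hT, Set.mem_setOf_eq]
    have : Finset.univ.filter (fun b => p D b ω / γ ≤ Finset.univ.sup' hFinne (fun b => p D b ω / γ)) = Finset.univ := by
      refine Finset.filter_eq_self.mpr (fun b _ => Finset.le_sup' (f := fun b => p D b ω / γ) (Finset.mem_univ b))
    rw [this, Finset.card_univ, Fintype.card_fin]
    exact hceilB
  have hTbdd : BddBelow T := by
    refine ⟨0, fun x hx => ?_⟩
    by_contra hneg
    push_neg at hneg
    have hcard : (Finset.univ.filter (fun b => p D b ω / γ ≤ x)).card = 0 := by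
      rw [Finset.card_eq_zero]
      refine Finset.filter_eq_empty_iff.mpr (fun b _ => ?_)
      push_neg
      calc x < 0 := hneg
        _ ≤ p D b ω / γ := div_nonneg (hp0 b) (le_of_lt hγpos)
    have hceil : 1 ≤ ⌈γ * (B:ℝ)⌉₊ := Nat.one_le_ceil_iff.mpr (by positivity)
    rw [hT, Set.mem_setOf_eq, hcard] at hx
    omega
  have hQdef : empQuantile γ (fun b => p D b ω / γ) = sInf T := rfl
  rw [hQdef] at hQlt
  obtain ⟨x, hxT, hxv⟩ := (csInf_lt_iff hTbdd hTne).mp hQlt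
  set k := ⌈γ * (B:ℝ)⌉₊ with hk
  have hk1 : 1 ≤ k := Nat.one_le_ceil_iff.mpr (by positivity)
  have hγk : γ * B ≤ k := Nat.le_ceil _
  have hγkB : γ ≤ (k:ℝ)/B := by
    rw [le_div_iff₀ hBR]; exact hγk
  refine ⟨k, ?_, hk1, hceilB, ?_⟩
  · calc γmin * B < γ * B := by nlinarith [hγ.1]
      _ ≤ k := hγk
  · have hsub : Finset.univ.filter (fun b => p D b ω / γ ≤ x) ⊆
        Finset.univ.filter (fun b => p D b ω ≤ v * k / B) := by
      intro b hb
      simp only [Finset.mem_filter, Finset.mem_univ, true_and] at hb ⊢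
      have h1 : p D b ω ≤ x * γ := (div_le_iff₀ hγpos).mp hb
      calc p D b ω ≤ x * γ := h1
        _ ≤ v * γ := by nlinarith
        _ ≤ v * ((k:ℝ)/B) := by nlinarith
        _ = v * k / B := by ring
    calc (k:ℝ) ≤ ((Finset.univ.filter (fun b => p D b ω / γ ≤ x)).card : ℝ) := by
          exact_mod_cast hxT
      _ ≤ (cnt p D (v * k / B) ω : ℝ) := by
          exact_mod_cast Finset.card_le_card hsub

lemma cnt_mono {ι Ω : Type*} {B : ℕ} (p : Finset ι → Fin B → Ω → ℝ) (D : Finset ι) {s t : ℝ}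
    (h : s ≤ t) (ω : Ω) : cnt p D s ω ≤ cnt p D t ω :=
  Finset.card_le_card (by
    intro b hb
    simp only [Finset.mem_filter] at hb ⊢
    exact ⟨hb.1, le_trans hb.2 h⟩)


lemma meas_cnt {ι Ω : Type*} [MeasurableSpace Ω] {B : ℕ} {p : Finset ι → Fin B → Ω → ℝ}
    {D : Finset ι} (hm : ∀ b, Measurable (p D b)) (t : ℝ) :
    Measurable (fun ω => (cnt p D t ω : ℝ)) := by
  have : (fun ω => (cnt p D t ω : ℝ)) =
      fun ω => ∑ b : Fin B, (if p D b ω ≤ t then (1:ℝ) else 0) := by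
    funext ω
    rw [cnt, Finset.card_filter]
    push_cast
    rfl
  rw [this]
  exact Finset.measurable_sum _ (fun b _ =>
    Measurable.ite (measurableSet_le (hm b) measurable_const) measurable_const measurable_const)

lemma lint_cnt {ι Ω : Type*} [MeasurableSpace Ω] (μ : Measure Ω) {B : ℕ}
    {p : Finset ι → Fin B → Ω → ℝ} {D : Finset ι} (hm : ∀ b, Measurable (p D b)) (t : ℝ) :
    ∫⁻ ω, ENNReal.ofReal (cnt p D t ω) ∂μ = ∑ b : Fin B, μ {ω | p D b ω ≤ t} := by
  have h1 : (fun ω => ENNReal.ofReal (cnt p D t ω)) =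
      fun ω => ∑ b : Fin B, Set.indicator {ω | p D b ω ≤ t} (fun _ => (1:ENNReal)) ω := by
    funext ω
    rw [cnt, Finset.card_filter]
    push_cast
    rw [ENNReal.ofReal_sum_of_nonneg (fun b _ => by positivity)]
    refine Finset.sum_congr rfl (fun b _ => ?_)
    by_cases h : p D b ω ≤ t <;> simp [h, Set.indicator_apply, Set.mem_setOf_eq]
  rw [h1, lintegral_finset_sum]
  · refine Finset.sum_congr rfl (fun b _ => ?_)
    rw [lintegral_indicator (measurableSet_le (hm b) measurable_const), setLIntegral_one]
  · exact fun b _ => Measurable.indicator measurable_const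
      (measurableSet_le (hm b) measurable_const)

lemma lint_f {ι Ω : Type*} [MeasurableSpace Ω] (μ : Measure Ω) {B : ℕ}
    {p : Finset ι → Fin B → Ω → ℝ} {D : Finset ι} (hm : ∀ b, Measurable (p D b))
    (v : ℝ) (k₀ : ℕ) :
    ∫⁻ ω, ENNReal.ofReal ((1/B) * (cnt p D v ω : ℝ)
        + ∑ j ∈ Finset.Ico k₀ B, (1/((j:ℝ)*(j+1))) * (cnt p D (v*(j:ℝ)/B) ω : ℝ)) ∂μ
      = ENNReal.ofReal (1/B) * ∑ b : Fin B, μ {ω | p D b ω ≤ v}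
        + ∑ j ∈ Finset.Ico k₀ B, ENNReal.ofReal (1/((j:ℝ)*(j+1)))
            * ∑ b : Fin B, μ {ω | p D b ω ≤ v*(j:ℝ)/B} := by
  have h1 : ∀ ω, ENNReal.ofReal ((1/B) * (cnt p D v ω : ℝ)
        + ∑ j ∈ Finset.Ico k₀ B, (1/((j:ℝ)*(j+1))) * (cnt p D (v*(j:ℝ)/B) ω : ℝ))
      = ENNReal.ofReal (1/B) * ENNReal.ofReal ((cnt p D v ω : ℝ))
        + ∑ j ∈ Finset.Ico k₀ B, ENNReal.ofReal (1/((j:ℝ)*(j+1)))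
            * ENNReal.ofReal ((cnt p D (v*(j:ℝ)/B) ω : ℝ)) := by
    intro ω
    rw [ENNReal.ofReal_add (by positivity) (Finset.sum_nonneg (fun j _ => by positivity)),
      ENNReal.ofReal_mul (by positivity),
      ENNReal.ofReal_sum_of_nonneg (fun j _ => by positivity)]
    congr 1
    exact Finset.sum_congr rfl (fun j _ => ENNReal.ofReal_mul (by positivity))
  rw [lintegral_congr h1, lintegral_add_left, lintegral_const_mul _
      ((meas_cnt hm v).ennreal_ofReal), lint_cnt μ hm v,
    lintegral_finset_sum]
  · congr 1
    refine Finset.sum_congr rfl (fun j _ => ?_)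
    rw [lintegral_const_mul _ ((meas_cnt hm _).ennreal_ofReal), lint_cnt μ hm _]
  · exact fun j _ => Measurable.const_mul
      ((meas_cnt hm _).ennreal_ofReal) _
  · exact Measurable.const_mul ((meas_cnt hm v).ennreal_ofReal) _

lemma exists_max {ι : Type*} [DecidableEq ι] (𝒯 : Finset (Finset ι)) (S₀ : Finset ι)
    {C : Finset ι} (hC : C ∈ nullClusters 𝒯 S₀) :
    ∃ D ∈ maxNullClusters 𝒯 S₀, C ⊆ D := by
  set 𝒮 := (nullClusters 𝒯 S₀).filter (fun D => C ⊆ D) with h𝒮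
  have h𝒮ne : 𝒮.Nonempty := ⟨C, Finset.mem_filter.mpr ⟨hC, subset_rfl⟩⟩
  obtain ⟨D, hD𝒮, hDmax⟩ := Finset.exists_max_image 𝒮 (fun D => D.card) h𝒮ne
  obtain ⟨hDnull, hCD⟩ := Finset.mem_filter.mp hD𝒮
  refine ⟨D, Finset.mem_filter.mpr ⟨hDnull, fun D' hD' hss => ?_⟩, hCD⟩
  have hD'𝒮 : D' ∈ 𝒮 := Finset.mem_filter.mpr ⟨hD', hCD.trans hss.subset⟩
  exact absurd (hDmax D' hD'𝒮) (not_le.mpr (Finset.card_lt_card hss))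


set_option maxHeartbeats 1000000 in
/-- **FWER control** -/
theorem fwer_control_Phier
    {ι : Type*} [DecidableEq ι] {Ω : Type*} [MeasurableSpace Ω]
    (ℙ : Measure Ω) [IsProbabilityMeasure ℙ]
    (V S₀ : Finset ι) (𝒯 : Finset (Finset ι))
    (h𝒯 : IsHierarchy V 𝒯) (hS₀ : S₀ ⊆ V)
    {B : ℕ} (hB : 1 ≤ B) (p : Finset ι → Fin B → Ω → ℝ)
    (hmeas : ∀ C ∈ 𝒯, ∀ b : Fin B, Measurable (p C b))
    (hp01 : ∀ C ∈ 𝒯, ∀ (b : Fin B) (ω : Ω), p C b ω ∈ Set.Icc (0 : ℝ) 1)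
    {δ : ℝ} (hδ : δ ∈ Set.Ioo (0 : ℝ) 1)
    (A : Set Ω) (hA : MeasurableSet A)
    (hPA : ENNReal.ofReal ((1 - δ) ^ B) ≤ ℙ A)
    (hsuper : ∀ b : Fin B, ∀ t ∈ Set.Ioo (0 : ℝ) 1,
      ∑ C ∈ maxNullClusters 𝒯 S₀, ℙ ({ω | p C b ω ≤ t} ∩ A) ≤ ENNReal.ofReal t)
    {γmin : ℝ} (hγmin : γmin ∈ Set.Ioo (0 : ℝ) 1)
    {α : ℝ} (hα : α ∈ Set.Ioo (0 : ℝ) 1) :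
    ℙ {ω | ∃ C ∈ nullClusters 𝒯 S₀, Phier 𝒯 p γmin C ω ≤ α}
        ≤ ENNReal.ofReal (α + 1 - (1 - δ) ^ B)
      ∧ α + 1 - (1 - δ) ^ B ≤ α + B * δ := by
  obtain ⟨hα0, hα1⟩ := hα
  obtain ⟨hγ0, hγ1⟩ := hγmin
  obtain ⟨hδ0, hδ1⟩ := hδ
  have hpow0 : (0:ℝ) ≤ (1 - δ) ^ B := pow_nonneg (by linarith) B
  have hpow1 : (1 - δ) ^ B ≤ 1 := pow_le_one₀ (by linarith) (by linarith)
  constructor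
  swap
  · -- Bernoulli
    have h := one_add_mul_le_pow (a := -δ) (by linarith) B
    have : 1 - (B:ℝ) * δ ≤ (1 - δ) ^ B := by
      calc 1 - (B:ℝ) * δ = 1 + (B:ℝ) * (-δ) := by ring
        _ ≤ (1 + -δ) ^ B := h
        _ = (1 - δ) ^ B := by ring_nf
    linarith
  -- main FWER bound
  have hBR : (0:ℝ) < B := by exact_mod_cast hB
  set L : ℝ := 1 - Real.log γmin with hLdef
  have hlogneg : Real.log γmin < 0 := Real.log_neg hγ0 hγ1
  have hL1 : 1 < L := by rw [hLdef]; linarith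
  have hL0 : 0 < L := by linarith
  set u : ℝ := α / L with hudef
  have hu0 : 0 < u := by positivity
  have huα : u < α := div_lt_self hα0 hL1
  have hu1 : u < 1 := lt_trans huα hα1
  set k₀ : ℕ := ⌊γmin * B⌋₊ + 1 with hk₀def
  have hk₀1 : 1 ≤ k₀ := Nat.le_add_left 1 _
  have hγBpos : (0:ℝ) < γmin * B := by positivity
  have hk₀B : k₀ ≤ B := by
    have : ⌊γmin * B⌋₊ < B := (Nat.floor_lt (le_of_lt hγBpos)).mpr (by nlinarith)
    omega
  have hγk₀ : γmin * B < k₀ := by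
    have := Nat.lt_floor_add_one (γmin * B)
    rw [hk₀def]
    push_cast
    linarith
  set μ := ℙ.restrict A with hμdef
  set S : Finset ι → Set Ω := fun D => {ω | Pval p γmin D ω ≤ α} with hSdef
  -- Step 1: inclusion into union over maximal null clusters
  have hsub : {ω | ∃ C ∈ nullClusters 𝒯 S₀, Phier 𝒯 p γmin C ω ≤ α} ⊆
      (⋃ D ∈ maxNullClusters 𝒯 S₀, (S D ∩ A)) ∪ Aᶜ := by
    intro ω hω
    obtain ⟨C, hC, hPh⟩ := hω
    obtain ⟨D, hDmax, hCD⟩ := exists_max 𝒯 S₀ hC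
    have hD𝒯 : D ∈ 𝒯 :=
      (Finset.mem_filter.mp ((Finset.mem_filter.mp hDmax).1)).1
    have hDmem : D ∈ insert C (𝒯.filter (fun D => C ⊆ D)) :=
      Finset.mem_insert.mpr (Or.inr (Finset.mem_filter.mpr ⟨hD𝒯, hCD⟩))
    have hPD : Pval p γmin D ω ≤ α :=
      le_trans (Finset.le_sup' (f := fun D => Pval p γmin D ω) hDmem) hPh
    by_cases hωA : ω ∈ A
    · exact Or.inl (Set.mem_biUnion hDmax ⟨hPD, hωA⟩)
    · exact Or.inr hωA
  -- Step 2: per-cluster bound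
  have Hmain : ∀ v : ℝ, u < v → v < 1 →
      ∑ D ∈ maxNullClusters 𝒯 S₀, μ (S D) ≤ ENNReal.ofReal (v * L) := by
    intro v huv hv1
    have hv0 : 0 < v := lt_trans hu0 huv
    -- notations
    have hperD : ∀ D ∈ maxNullClusters 𝒯 S₀, μ (S D) ≤
        ENNReal.ofReal (1/B) * ∑ b : Fin B, μ {ω | p D b ω ≤ v}
        + ∑ j ∈ Finset.Ico k₀ B, ENNReal.ofReal (1/((j:ℝ)*(j+1)))
            * ∑ b : Fin B, μ {ω | p D b ω ≤ v*(j:ℝ)/B} := by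
      intro D hD
      have hD𝒯 : D ∈ 𝒯 := (Finset.mem_filter.mp ((Finset.mem_filter.mp hD).1)).1
      have hm : ∀ b, Measurable (p D b) := hmeas D hD𝒯
      set f : Ω → ℝ := fun ω => (1/B) * (cnt p D v ω : ℝ)
        + ∑ j ∈ Finset.Ico k₀ B, (1/((j:ℝ)*(j+1))) * (cnt p D (v*(j:ℝ)/B) ω : ℝ) with hfdef
      -- pointwise bound on S D
      have hpt : ∀ ω ∈ S D, (1:ENNReal) ≤ ENNReal.ofReal (f ω) := by
        intro ω hω
        refine ENNReal.one_le_ofReal.mpr ?_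
        have hPv : Pval p γmin D ω ≤ α := hω
        have hX : (1 - Real.log γmin) *
            sInf ((fun γ => Qagg p γ D ω) '' Set.Ioo γmin 1) ≤ α := by
          rcases min_le_iff.mp hPv with h | h
          · linarith
          · exact h
        have hinf : sInf ((fun γ => Qagg p γ D ω) '' Set.Ioo γmin 1) < v := by
          have : sInf ((fun γ => Qagg p γ D ω) '' Set.Ioo γmin 1) ≤ u := by
            rw [hudef, le_div_iff₀ hL0]
            calc sInf ((fun γ => Qagg p γ D ω) '' Set.Ioo γmin 1) * L
                = L * sInf ((fun γ => Qagg p γ D ω) '' Set.Ioo γmin 1) := by ring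
              _ ≤ α := hX
          linarith
        obtain ⟨k, hγmk, hk1, hkB, hcount⟩ := exists_k hB p hγ0 hγ1
          (fun b => (hp01 D hD𝒯 b ω).1) hv0 (le_of_lt hv1) hinf
        have hk₀k : k₀ ≤ k := by
          have : ⌊γmin * B⌋₊ < k := (Nat.floor_lt (le_of_lt hγBpos)).mpr hγmk
          omega
        exact one_le_f hB (fun t => cnt p D t ω) (fun s t hst => cnt_mono p D hst ω)
          (le_of_lt hv0) hk₀1 hk₀k hkB hcount
      -- Markov
      have hfm : Measurable fun ω => ENNReal.ofReal (f ω) := by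
        apply Measurable.ennreal_ofReal
        apply Measurable.add
        · exact (meas_cnt hm v).const_mul _
        · exact Finset.measurable_sum _ (fun j _ => (meas_cnt hm _).const_mul _)
      calc μ (S D) = ∫⁻ ω in S D, 1 ∂μ := (setLIntegral_one _).symm
        _ ≤ ∫⁻ ω in S D, ENNReal.ofReal (f ω) ∂μ := setLIntegral_mono hfm hpt
        _ ≤ ∫⁻ ω, ENNReal.ofReal (f ω) ∂μ := setLIntegral_le_lintegral _ _
        _ = _ := lint_f μ hm v k₀
    -- sum over D, apply hsuper
    have hμT : ∀ (D : Finset ι) (b : Fin B) (t : ℝ),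
        μ {ω | p D b ω ≤ t} = ℙ ({ω | p D b ω ≤ t} ∩ A) := by
      intro D b t
      rw [hμdef, Measure.restrict_apply' hA]
    calc ∑ D ∈ maxNullClusters 𝒯 S₀, μ (S D)
        ≤ ∑ D ∈ maxNullClusters 𝒯 S₀,
          (ENNReal.ofReal (1/B) * ∑ b : Fin B, μ {ω | p D b ω ≤ v}
            + ∑ j ∈ Finset.Ico k₀ B, ENNReal.ofReal (1/((j:ℝ)*(j+1)))
                * ∑ b : Fin B, μ {ω | p D b ω ≤ v*(j:ℝ)/B}) := Finset.sum_le_sum hperD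
      _ = ENNReal.ofReal (1/B)
            * ∑ b : Fin B, ∑ D ∈ maxNullClusters 𝒯 S₀, ℙ ({ω | p D b ω ≤ v} ∩ A)
          + ∑ j ∈ Finset.Ico k₀ B, ENNReal.ofReal (1/((j:ℝ)*(j+1)))
            * ∑ b : Fin B, ∑ D ∈ maxNullClusters 𝒯 S₀, ℙ ({ω | p D b ω ≤ v*(j:ℝ)/B} ∩ A) := by
          rw [Finset.sum_add_distrib]
          congr 1
          · rw [← Finset.mul_sum]
            congr 1
            rw [Finset.sum_comm]
            exact Finset.sum_congr rfl (fun b _ =>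
              Finset.sum_congr rfl (fun D _ => hμT D b _))
          · rw [Finset.sum_comm]
            refine Finset.sum_congr rfl (fun j _ => ?_)
            rw [← Finset.mul_sum]
            congr 1
            rw [Finset.sum_comm]
            exact Finset.sum_congr rfl (fun b _ =>
              Finset.sum_congr rfl (fun D _ => hμT D b _))
      _ ≤ ENNReal.ofReal (1/B) * ∑ _b : Fin B, ENNReal.ofReal v
          + ∑ j ∈ Finset.Ico k₀ B, ENNReal.ofReal (1/((j:ℝ)*(j+1)))
            * ∑ _b : Fin B, ENNReal.ofReal (v*(j:ℝ)/B) := by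
          refine add_le_add (mul_le_mul_right
              (Finset.sum_le_sum fun b _ => hsuper b v ⟨hv0, hv1⟩) _)
            (Finset.sum_le_sum fun j hj => mul_le_mul_right
              (Finset.sum_le_sum fun b _ => ?_) _)
          obtain ⟨hjk₀, hjB⟩ := Finset.mem_Ico.mp hj
          have hj1 : 1 ≤ j := le_trans hk₀1 hjk₀
          have hjR : (0:ℝ) < j := by exact_mod_cast hj1
          have hjBR : (j:ℝ) < B := by exact_mod_cast hjB
          refine hsuper _ _ ⟨by positivity, ?_⟩
          have hlt : v*(j:ℝ)/B < v := by
            rw [div_lt_iff₀ hBR]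
            nlinarith
          linarith
      _ = ENNReal.ofReal v + ∑ j ∈ Finset.Ico k₀ B, ENNReal.ofReal (v/((j:ℝ)+1)) := by
          congr 1
          · rw [Finset.sum_const, Finset.card_univ, Fintype.card_fin, nsmul_eq_mul,
              ← ENNReal.ofReal_natCast B, ← ENNReal.ofReal_mul (by positivity),
              ← ENNReal.ofReal_mul (by positivity)]
            congr 1
            field_simp
          · refine Finset.sum_congr rfl (fun j hj => ?_)
            obtain ⟨hjk₀, hjB⟩ := Finset.mem_Ico.mp hj
            have hj1 : 1 ≤ j := le_trans hk₀1 hjk₀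
            have hjR : (0:ℝ) < j := by exact_mod_cast hj1
            rw [Finset.sum_const, Finset.card_univ, Fintype.card_fin, nsmul_eq_mul,
              ← ENNReal.ofReal_natCast B, ← ENNReal.ofReal_mul (by positivity),
              ← ENNReal.ofReal_mul (by positivity)]
            congr 1
            field_simp
      _ = ENNReal.ofReal (v * (1 + ∑ j ∈ Finset.Ico k₀ B, 1/((j:ℝ)+1))) := by
          rw [← ENNReal.ofReal_sum_of_nonneg (fun j hj => by
            have hj1 : 1 ≤ j := le_trans hk₀1 (Finset.mem_Ico.mp hj).1
            have hjR : (0:ℝ) < j := by exact_mod_cast hj1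
            positivity),
            ← ENNReal.ofReal_add (le_of_lt hv0) (Finset.sum_nonneg (fun j hj => by
              have hj1 : 1 ≤ j := le_trans hk₀1 (Finset.mem_Ico.mp hj).1
              have hjR : (0:ℝ) < j := by exact_mod_cast hj1
              positivity))]
          congr 1
          rw [mul_add, mul_one, Finset.mul_sum]
          congr 1
          exact Finset.sum_congr rfl (fun j _ => by ring)
      _ ≤ ENNReal.ofReal (v * L) := by
          apply ENNReal.ofReal_le_ofReal
          have hharm : ∑ j ∈ Finset.Ico k₀ B, 1/((j:ℝ)+1) ≤ Real.log B - Real.log k₀ :=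
            harm_le_log hk₀1 hk₀B
          have hlogk₀ : Real.log (γmin * B) ≤ Real.log k₀ :=
            Real.log_le_log hγBpos (le_of_lt hγk₀)
          have hlogmul : Real.log (γmin * B) = Real.log γmin + Real.log B :=
            Real.log_mul (ne_of_gt hγ0) (ne_of_gt hBR)
          have : (1:ℝ) + ∑ j ∈ Finset.Ico k₀ B, 1/((j:ℝ)+1) ≤ L := by
            rw [hLdef]; linarith
          nlinarith
  -- Step 3: epsilon limit
  have hsum_le : ∑ D ∈ maxNullClusters 𝒯 S₀, μ (S D) ≤ ENNReal.ofReal α := by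
    apply ENNReal.le_of_forall_pos_le_add
    intro ε hε _
    have hεR : (0:ℝ) < ε := hε
    set εr : ℝ := min ((1-u)/2) ((ε:ℝ)/(2*L)) with hεrdef
    have hεr0 : 0 < εr := lt_min (by linarith) (by positivity)
    set v : ℝ := u + εr with hvdef
    have huv : u < v := by rw [hvdef]; linarith
    have hv1 : v < 1 := by
      have : εr ≤ (1-u)/2 := min_le_left _ _
      rw [hvdef]; linarith
    have h1 := Hmain v huv hv1
    have heq : v * L = α + εr * L := by
      rw [hvdef, hudef]; field_simp
    have h2 : ENNReal.ofReal (v * L) ≤ ENNReal.ofReal α + (ε : ENNReal) := by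
      rw [heq, ENNReal.ofReal_add (le_of_lt hα0) (by positivity)]
      gcongr
      have hεrL : εr * L ≤ (ε:ℝ) := by
        have : εr ≤ (ε:ℝ)/(2*L) := min_le_right _ _
        calc εr * L ≤ ((ε:ℝ)/(2*L)) * L := by nlinarith
          _ = (ε:ℝ)/2 := by field_simp
          _ ≤ (ε:ℝ) := by linarith
      calc ENNReal.ofReal (εr * L) ≤ ENNReal.ofReal (ε:ℝ) := ENNReal.ofReal_le_ofReal hεrL
        _ = (ε : ENNReal) := ENNReal.ofReal_coe_nnreal
    exact le_trans h1 h2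
  -- Step 4: complement bound and assembly
  have hAc : ℙ Aᶜ ≤ ENNReal.ofReal (1 - (1 - δ) ^ B) := by
    rw [measure_compl hA (measure_ne_top ℙ A), measure_univ]
    calc (1:ENNReal) - ℙ A ≤ 1 - ENNReal.ofReal ((1 - δ) ^ B) := tsub_le_tsub_left hPA 1
      _ = ENNReal.ofReal 1 - ENNReal.ofReal ((1 - δ) ^ B) := by rw [ENNReal.ofReal_one]
      _ = ENNReal.ofReal (1 - (1 - δ) ^ B) := (ENNReal.ofReal_sub 1 hpow0).symm
  calc ℙ {ω | ∃ C ∈ nullClusters 𝒯 S₀, Phier 𝒯 p γmin C ω ≤ α}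
      ≤ ℙ ((⋃ D ∈ maxNullClusters 𝒯 S₀, (S D ∩ A)) ∪ Aᶜ) := measure_mono hsub
    _ ≤ ℙ (⋃ D ∈ maxNullClusters 𝒯 S₀, (S D ∩ A)) + ℙ Aᶜ := measure_union_le _ _
    _ ≤ (∑ D ∈ maxNullClusters 𝒯 S₀, ℙ (S D ∩ A)) + ℙ Aᶜ := by
        gcongr
        exact measure_biUnion_finset_le _ _
    _ = (∑ D ∈ maxNullClusters 𝒯 S₀, μ (S D)) + ℙ Aᶜ := by
        congr 1
        exact Finset.sum_congr rfl (fun D _ => (Measure.restrict_apply' hA).symm)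
    _ ≤ ENNReal.ofReal α + ENNReal.ofReal (1 - (1 - δ) ^ B) := add_le_add hsum_le hAc
    _ = ENNReal.ofReal (α + 1 - (1 - δ) ^ B) := by
        rw [← ENNReal.ofReal_add (le_of_lt hα0) (by linarith)]
        congr 1
        ring
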